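/- Let r ∈ ℝ^N, Z ∈ ℝ^{N×k}, λ₁ > 0, λ₂ > 0, and set a = Zᵀr. Then θ = 0 minimizes f(θ) = (1/2)‖r − Zθ‖₂² + λ₁‖θ‖₂ + λ₂‖θ‖₁ over θ ∈ ℝ^k if and only if there exist vectors s, t ∈ ℝ^k with ‖s‖₂ ≤ 1 and t_j ∈ [−1,1] for all j such that a_j = λ₁ s_j + λ₂ t_j for every j. -/

import Mathlib

/-- Euclidean norm of a vector in ℝ^n. -/
noncomputable def norm2 {n : ℕ} (v : Fin n → ℝ) : ℝ :=
  Real.sqrt (∑ i, v i ^ 2)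

lemma norm2_nonneg {n : ℕ} (v : Fin n → ℝ) : 0 ≤ norm2 v := Real.sqrt_nonneg _

lemma norm2_sq {n : ℕ} (v : Fin n → ℝ) : norm2 v ^ 2 = ∑ i, v i ^ 2 :=
  Real.sq_sqrt (Finset.sum_nonneg fun i _ => sq_nonneg _)

lemma norm2_smul {n : ℕ} (c : ℝ) (hc : 0 ≤ c) (v : Fin n → ℝ) :
    norm2 (fun i => c * v i) = c * norm2 v := by
  unfold norm2
  rw [show (∑ i, (c * v i) ^ 2) = c ^ 2 * ∑ i, v i ^ 2 by rw [Finset.mul_sum]; ring_nf,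
    Real.sqrt_mul (sq_nonneg c), Real.sqrt_sq hc]

/-- Cauchy–Schwarz in `norm2` form. -/
lemma sum_mul_le_norm2 {n : ℕ} (u v : Fin n → ℝ) :
    (∑ i, u i * v i) ≤ norm2 u * norm2 v := by
  have h := Finset.sum_mul_sq_le_sq_mul_sq Finset.univ u v
  have h1 : (∑ i, u i * v i) ≤ |∑ i, u i * v i| := le_abs_self _
  have h2 : |∑ i, u i * v i| = Real.sqrt ((∑ i, u i * v i) ^ 2) := (Real.sqrt_sq_eq_abs _).symm
  calc (∑ i, u i * v i) ≤ Real.sqrt ((∑ i, u i * v i) ^ 2) := h2 ▸ h1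
    _ ≤ Real.sqrt ((∑ i, u i ^ 2) * ∑ i, v i ^ 2) := Real.sqrt_le_sqrt h
    _ = norm2 u * norm2 v := by
        rw [Real.sqrt_mul (Finset.sum_nonneg fun i _ => sq_nonneg _)]; rfl

/-- With `a = Zᵀr`, the zero vector minimizes the blockwise sparse group lasso
objective `f(θ) = (1/2)‖r − Zθ‖₂² + λ₁‖θ‖₂ + λ₂‖θ‖₁` if and only if there
exist `s, t ∈ ℝ^k` with `‖s‖₂ ≤ 1`, `t_j ∈ [−1,1]`, and
`a_j = λ₁ s_j + λ₂ t_j` for every `j`. -/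
theorem sparse_group_lasso_zero_iff_subgradient (N k : ℕ) (r : Fin N → ℝ)
    (Z : Matrix (Fin N) (Fin k) ℝ) (lam1 lam2 : ℝ)
    (hlam1 : 0 < lam1) (hlam2 : 0 < lam2)
    (a : Fin k → ℝ) (ha : a = Z.transpose.mulVec r) :
    (∀ θ : Fin k → ℝ,
        (1 / 2) * norm2 (r - Z.mulVec 0) ^ 2 + lam1 * norm2 (0 : Fin k → ℝ)
            + lam2 * ∑ j, |(0 : Fin k → ℝ) j|
          ≤ (1 / 2) * norm2 (r - Z.mulVec θ) ^ 2 + lam1 * norm2 θ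
            + lam2 * ∑ j, |θ j|)
      ↔ ∃ s t : Fin k → ℝ, norm2 s ≤ 1 ∧ (∀ j, t j ∈ Set.Icc (-1 : ℝ) 1)
          ∧ ∀ j, a j = lam1 * s j + lam2 * t j := by
  -- preliminaries
  have hZ0 : Z.mulVec 0 = 0 := Matrix.mulVec_zero Z
  have hn0 : norm2 (0 : Fin k → ℝ) = 0 := by unfold norm2; simp
  have habs0 : (∑ j, |(0 : Fin k → ℝ) j|) = 0 := by simp
  -- key expansion
  have hinner : ∀ θ : Fin k → ℝ, (∑ j, a j * θ j) = ∑ i, r i * Z.mulVec θ i := by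
    intro θ
    rw [ha]
    simp only [Matrix.mulVec, dotProduct, Matrix.transpose_apply]
    simp_rw [Finset.sum_mul, Finset.mul_sum]
    rw [Finset.sum_comm]
    exact Finset.sum_congr rfl fun i _ => Finset.sum_congr rfl fun j _ => by ring
  have hexp : ∀ θ : Fin k → ℝ,
      (1 / 2) * norm2 (r - Z.mulVec θ) ^ 2
        = (1 / 2) * norm2 r ^ 2 - (∑ j, a j * θ j)
            + (1 / 2) * ∑ i, (Z.mulVec θ i) ^ 2 := by
    intro θ
    rw [norm2_sq, norm2_sq, hinner]
    have : (∑ i, (r - Z.mulVec θ) i ^ 2)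
        = ∑ i, (r i ^ 2 - 2 * (r i * Z.mulVec θ i) + (Z.mulVec θ i) ^ 2) := by
      congr 1; ext i; simp [Pi.sub_apply]; ring
    rw [this, Finset.sum_add_distrib, Finset.sum_sub_distrib, ← Finset.mul_sum]
    ring
  have hf0 : (1 / 2) * norm2 (r - Z.mulVec 0) ^ 2 + lam1 * norm2 (0 : Fin k → ℝ)
      + lam2 * ∑ j, |(0 : Fin k → ℝ) j| = (1 / 2) * norm2 r ^ 2 := by
    rw [hZ0, sub_zero, hn0, habs0]; ring
  -- the scalar subgradient condition
  have key : (∀ θ : Fin k → ℝ,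
        (1 / 2) * norm2 (r - Z.mulVec 0) ^ 2 + lam1 * norm2 (0 : Fin k → ℝ)
            + lam2 * ∑ j, |(0 : Fin k → ℝ) j|
          ≤ (1 / 2) * norm2 (r - Z.mulVec θ) ^ 2 + lam1 * norm2 θ
            + lam2 * ∑ j, |θ j|)
      ↔ (∀ θ : Fin k → ℝ, (∑ j, a j * θ j) ≤ lam1 * norm2 θ + lam2 * ∑ j, |θ j|) := by
    constructor
    · intro hmin θ
      -- apply hmin to ε • θ and let ε → 0
      have hstep : ∀ ε : ℝ, 0 < ε →
          (∑ j, a j * θ j) ≤ ε * ((1 / 2) * ∑ i, (Z.mulVec θ i) ^ 2)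
            + (lam1 * norm2 θ + lam2 * ∑ j, |θ j|) := by
        intro ε hε
        have h := hmin (fun j => ε * θ j)
        rw [hf0, hexp] at h
        have hmv : Z.mulVec (fun j => ε * θ j) = fun i => ε * Z.mulVec θ i := by
          ext i
          simp only [Matrix.mulVec, dotProduct, Finset.mul_sum]
          exact Finset.sum_congr rfl fun j _ => by ring
        rw [hmv] at h
        have h2 : (∑ j, a j * (ε * θ j)) = ε * ∑ j, a j * θ j := by
          rw [Finset.mul_sum]; congr 1; ext j; ring
        have h3 : (∑ i, (ε * Z.mulVec θ i) ^ 2) = ε ^ 2 * ∑ i, (Z.mulVec θ i) ^ 2 := by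
          rw [Finset.mul_sum]; congr 1; ext i; ring
        have h4 : norm2 (fun j => ε * θ j) = ε * norm2 θ := norm2_smul ε hε.le θ
        have h5 : (∑ j, |ε * θ j|) = ε * ∑ j, |θ j| := by
          rw [Finset.mul_sum]; congr 1; ext j
          rw [abs_mul, abs_of_pos hε]
        rw [h2, h3, h4, h5] at h
        have h6 : ε * (∑ j, a j * θ j)
            ≤ ε * (ε * ((1 / 2) * ∑ i, (Z.mulVec θ i) ^ 2)
              + (lam1 * norm2 θ + lam2 * ∑ j, |θ j|)) := by nlinarith [h]
        exact le_of_mul_le_mul_left h6 hε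
      -- limit argument
      by_contra hcon
      push_neg at hcon
      set C := lam1 * norm2 θ + lam2 * ∑ j, |θ j| - ∑ j, a j * θ j with hC
      set D := (1 / 2) * ∑ i, (Z.mulVec θ i) ^ 2 with hD
      have hDnn : 0 ≤ D := by
        have : 0 ≤ ∑ i, (Z.mulVec θ i) ^ 2 := Finset.sum_nonneg fun i _ => sq_nonneg _
        positivity
      have hCneg : C < 0 := by simp only [hC]; linarith
      have hεpos : 0 < -C / (2 * (D + 1)) := div_pos (by linarith) (by linarith)
      have := hstep _ hεpos
      have : 0 ≤ (-C / (2 * (D + 1))) * D + C := by linarith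
      have hfrac : (-C / (2 * (D + 1))) * D ≤ -C / 2 := by
        rw [div_mul_eq_mul_div, div_le_div_iff₀ (by positivity) (by norm_num)]
        nlinarith
      linarith
    · intro hsub θ
      rw [hf0, hexp]
      have h1 := hsub θ
      have h2 : 0 ≤ ∑ i, (Z.mulVec θ i) ^ 2 := Finset.sum_nonneg fun i _ => sq_nonneg _
      have h3 : 0 ≤ lam1 * norm2 θ := mul_nonneg hlam1.le (norm2_nonneg θ)
      linarith
  rw [key]
  constructor
  · -- construct s, t via soft thresholding
    intro hsub
    set t : Fin k → ℝ := fun j => max (-1) (min 1 (a j / lam2)) with ht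
    set u : Fin k → ℝ := fun j => a j - lam2 * t j with hu
    have htm : ∀ j, t j ∈ Set.Icc (-1 : ℝ) 1 := by
      intro j
      constructor
      · exact le_max_left _ _
      · exact max_le (by norm_num) (min_le_left _ _)
    -- per-coordinate identity: a j * u j = u j ^ 2 + lam2 * |u j|
    have hcoord : ∀ j, a j * u j = u j ^ 2 + lam2 * |u j| := by
      intro j
      rcases le_total (a j) (-lam2) with h | h
      · have ht1 : t j = -1 := by
          simp only [ht]
          have : a j / lam2 ≤ -1 := by
            rw [div_le_iff₀ hlam2]; linarith
          rw [min_eq_right (by linarith), max_eq_left this]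
        have hu1 : u j = a j + lam2 := by simp [hu, ht1]
        have hle : u j ≤ 0 := by rw [hu1]; linarith
        rw [hu1] at hle
        rw [hu1, abs_of_nonpos hle]; ring
      rcases le_total lam2 (a j) with h' | h'
      · have ht1 : t j = 1 := by
          simp only [ht]
          have h1 : (1 : ℝ) ≤ a j / lam2 := by
            rw [le_div_iff₀ hlam2]; linarith
          rw [min_eq_left h1, max_eq_right (by norm_num)]
        have hu1 : u j = a j - lam2 := by simp [hu, ht1]
        have hle : 0 ≤ u j := by rw [hu1]; linarith
        rw [hu1] at hle
        rw [hu1, abs_of_nonneg hle]; ring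
      · have ht1 : t j = a j / lam2 := by
          simp only [ht]
          have h1 : a j / lam2 ≤ 1 := by rw [div_le_iff₀ hlam2]; linarith
          have h2 : (-1 : ℝ) ≤ a j / lam2 := by rw [neg_le, ← neg_div, div_le_iff₀ hlam2]; linarith
          rw [min_eq_right h1, max_eq_right h2]
        have hu1 : u j = 0 := by
          simp [hu, ht1, mul_div_cancel₀ _ hlam2.ne']
        simp [hu1]
      done
    -- sum inequality with θ = u
    have hsum := hsub u
    have hau : (∑ j, a j * u j) = (∑ j, u j ^ 2) + lam2 * ∑ j, |u j| := by
      rw [Finset.mul_sum, ← Finset.sum_add_distrib]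
      exact Finset.sum_congr rfl fun j _ => hcoord j
    have hnu : (∑ j, u j ^ 2) = norm2 u ^ 2 := (norm2_sq u).symm
    have hkey : norm2 u ^ 2 ≤ lam1 * norm2 u := by
      rw [hau, hnu] at hsum; linarith
    have hnorm : norm2 u ≤ lam1 := by
      rcases eq_or_lt_of_le (norm2_nonneg u) with h0 | h0
      · rw [← h0]; exact hlam1.le
      · nlinarith
    refine ⟨fun j => u j / lam1, t, ?_, htm, ?_⟩
    · have : norm2 (fun j => u j / lam1) = (1 / lam1) * norm2 u := by
        have := norm2_smul (1 / lam1) (by positivity) u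
        simpa [div_eq_inv_mul, one_div] using this
      rw [this]
      rw [div_mul_eq_mul_div, div_le_one hlam1, one_mul]
      exact hnorm
    · intro j
      simp only [hu]
      field_simp
      ring
  · -- given s, t, verify the subgradient inequality via Cauchy–Schwarz
    rintro ⟨s, t, hs, htm, hat⟩ θ
    have h1 : (∑ j, a j * θ j)
        = lam1 * (∑ j, s j * θ j) + lam2 * (∑ j, t j * θ j) := by
      rw [Finset.mul_sum, Finset.mul_sum, ← Finset.sum_add_distrib]
      refine Finset.sum_congr rfl fun j _ => ?_
      rw [hat j]; ring
    have h2 : (∑ j, s j * θ j) ≤ norm2 θ := by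
      calc (∑ j, s j * θ j) ≤ norm2 s * norm2 θ := sum_mul_le_norm2 s θ
        _ ≤ 1 * norm2 θ := mul_le_mul_of_nonneg_right hs (norm2_nonneg θ)
        _ = norm2 θ := one_mul _
    have h3 : (∑ j, t j * θ j) ≤ ∑ j, |θ j| := by
      refine Finset.sum_le_sum fun j _ => ?_
      have := (htm j).1
      have := (htm j).2
      calc t j * θ j ≤ |t j * θ j| := le_abs_self _
        _ = |t j| * |θ j| := abs_mul _ _
        _ ≤ 1 * |θ j| := by
            refine mul_le_mul_of_nonneg_right ?_ (abs_nonneg _)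
            exact abs_le.mpr ⟨(htm j).1, (htm j).2⟩
        _ = |θ j| := one_mul _
    rw [h1]
    have := mul_le_mul_of_nonneg_left h2 hlam1.le
    have := mul_le_mul_of_nonneg_left h3 hlam2.le
    linarith
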